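/- The function g(κ) = κ·Erf(1,κ)/Φ(1,κ), where Φ(t,ξ) = (2πt)^{-1/2} exp(-ξ²/(2t)) is the standard heat kernel and Erf(t,ξ) = ∫_ξ^∞ Φ(t,ζ)dζ its tail, is strictly increasing on (0,∞) with g(0⁺)=0 and g(κ)→1 as κ→∞. Consequently, for every ρ∈(0,1) there is a unique κ_ρ>0 with g(κ_ρ)=ρ. -/

import Mathlib

open Real Filter Set Topology MeasureTheory

/-- The standard heat kernel `Φ(t,ξ) = (2πt)^{-1/2} exp(-ξ²/(2t))`. -/
noncomputable def heatK (t ξ : ℝ) : ℝ :=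
  (1 / Real.sqrt (2 * Real.pi * t)) * Real.exp (-ξ ^ 2 / (2 * t))

/-- The tail distribution function `Erf(t,ξ) = ∫_ξ^∞ Φ(t,ζ) dζ`. -/
noncomputable def erfT (t ξ : ℝ) : ℝ := ∫ ζ in Set.Ioi ξ, heatK t ζ

/-- `g(κ) = κ · Erf(1,κ) / Φ(1,κ)`. -/
noncomputable def gfun (κ : ℝ) : ℝ := κ * erfT 1 κ / heatK 1 κ

lemma heatK_one (ξ : ℝ) :
    heatK 1 ξ = (1 / Real.sqrt (2 * Real.pi)) * Real.exp (-(1/2) * ξ ^ 2) := by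
  simp only [heatK, mul_one]
  ring_nf

lemma heatK_pos (ξ : ℝ) : 0 < heatK 1 ξ := by
  rw [heatK_one]
  have : 0 < Real.sqrt (2 * Real.pi) := Real.sqrt_pos.2 (by positivity)
  positivity

lemma heatK_ne (ξ : ℝ) : heatK 1 ξ ≠ 0 := (heatK_pos ξ).ne'

lemma heatK_cont : Continuous (heatK 1) := by
  simp only [funext heatK_one]
  exact continuous_const.mul ((continuous_const.mul (continuous_pow 2)).rexp)

lemma heatK_integrable : Integrable (heatK 1) := by
  simp only [funext heatK_one]
  exact (integrable_exp_neg_mul_sq (by norm_num : (0:ℝ) < 1/2)).const_mul _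

lemma heatK_hasDeriv (ξ : ℝ) : HasDerivAt (heatK 1) (-(ξ * heatK 1 ξ)) ξ := by
  simp only [funext heatK_one]
  have h1 : HasDerivAt (fun x : ℝ => -(1/2) * x ^ 2) (-(1/2) * (2 * ξ)) ξ :=
    ((hasDerivAt_pow 2 ξ).const_mul _).congr_deriv (by ring)
  have := ((h1.exp).const_mul (1 / Real.sqrt (2 * Real.pi)))
  refine this.congr_deriv ?_
  ring

lemma heatK_tendsto : Tendsto (heatK 1) atTop (nhds 0) := by
  simp only [funext heatK_one]
  rw [show (0:ℝ) = (1 / Real.sqrt (2 * Real.pi)) * 0 by ring]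
  apply Tendsto.const_mul
  apply Real.tendsto_exp_atBot.comp
  have h2 : Tendsto (fun x : ℝ => x ^ 2) atTop atTop := tendsto_pow_atTop (by norm_num)
  have : Tendsto (fun x : ℝ => -(x ^ 2)) atTop atBot := tendsto_neg_atBot_iff.2 h2
  have h3 : Tendsto (fun x : ℝ => -(x ^ 2) / 2) atTop atBot := this.atBot_div_const (by norm_num)
  exact h3.congr (by intro x; ring)

lemma integrable_mul_heatK : Integrable (fun ζ : ℝ => ζ * heatK 1 ζ) := by
  simp only [funext heatK_one]
  have := (integrable_mul_exp_neg_mul_sq (by norm_num : (0:ℝ) < 1/2)).const_mul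
    (1 / Real.sqrt (2 * Real.pi))
  exact this.congr (Eventually.of_forall fun x => by simp only []; ring)

lemma I1 (κ : ℝ) : ∫ ζ in Set.Ioi κ, ζ * heatK 1 ζ = heatK 1 κ := by
  have hderiv : ∀ x ∈ Set.Ici κ, HasDerivAt (fun ζ => -heatK 1 ζ) (x * heatK 1 x) x := by
    intro x _
    have := (heatK_hasDeriv x).neg; rw [neg_neg] at this; exact this
  have := integral_Ioi_of_hasDerivAt_of_tendsto' hderiv
    integrable_mul_heatK.integrableOn (heatK_tendsto.neg.congr' (by simp))
  simpa using this

lemma I2 {κ : ℝ} (hκ : 0 < κ) :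
    ∫ ζ in Set.Ioi κ, (1 + 1/ζ^2) * heatK 1 ζ = heatK 1 κ / κ := by
  have hderiv : ∀ x ∈ Set.Ici κ,
      HasDerivAt (fun ζ => -(heatK 1 ζ / ζ)) ((1 + 1/x^2) * heatK 1 x) x := by
    intro x hx
    have hx0 : x ≠ 0 := (lt_of_lt_of_le hκ hx).ne'
    have := ((heatK_hasDeriv x).div (hasDerivAt_id x) hx0).neg
    refine this.congr_deriv ?_
    simp only [id]
    field_simp
    ring
  have hint : IntegrableOn (fun ζ : ℝ => (1 + 1/ζ^2) * heatK 1 ζ) (Set.Ioi κ) := by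
    apply Integrable.mono' ((heatK_integrable.const_mul (1 + 1/κ^2)).integrableOn)
    · apply ContinuousOn.aestronglyMeasurable _ measurableSet_Ioi
      apply ContinuousOn.mul _ heatK_cont.continuousOn
      refine continuousOn_const.add (continuousOn_const.div ?_ ?_)
      · exact (continuous_pow 2).continuousOn
      · intro x hx; exact pow_ne_zero _ (lt_trans hκ hx).ne'
    · rw [ae_restrict_iff' measurableSet_Ioi]
      refine Eventually.of_forall fun x hx => ?_
      have hxpos : 0 < x := lt_trans hκ hx
      have h1 : (1:ℝ) + 1/x^2 ≤ 1 + 1/κ^2 := by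
        gcongr
        exact le_of_lt hx
      have h2 : 0 ≤ (1:ℝ) + 1/x^2 := by positivity
      rw [Real.norm_of_nonneg (mul_nonneg h2 (heatK_pos x).le)]
      exact mul_le_mul_of_nonneg_right h1 (heatK_pos x).le
  have htend : Tendsto (fun ζ => -(heatK 1 ζ / ζ)) atTop (nhds 0) := by
    rw [show (0:ℝ) = -(0 * 0) by ring]
    exact ((heatK_tendsto.mul tendsto_inv_atTop_zero).congr
      (fun x => by rw [div_eq_mul_inv])).neg
  have := integral_Ioi_of_hasDerivAt_of_tendsto' hderiv hint htend
  simpa using this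

lemma pos_integral_aux {κ : ℝ} (f : ℝ → ℝ) (hpos : ∀ x ∈ Set.Ioi κ, 0 < f x)
    (hint : IntegrableOn f (Set.Ioi κ)) : 0 < ∫ x in Set.Ioi κ, f x := by
  rw [setIntegral_pos_iff_support_of_nonneg_ae _ hint]
  · refine lt_of_lt_of_le ?_ (measure_mono (fun x hx => ⟨(hpos x hx).ne', hx⟩))
    rw [Real.volume_Ioi]; exact ENNReal.zero_lt_top
  · exact (ae_restrict_iff' measurableSet_Ioi).2
      (Eventually.of_forall fun x hx => (hpos x hx).le)

lemma mills_upper {κ : ℝ} (hκ : 0 < κ) : κ * erfT 1 κ < heatK 1 κ := by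
  have key : 0 < ∫ ζ in Set.Ioi κ, (ζ - κ) * heatK 1 ζ := by
    apply pos_integral_aux
    · intro x hx
      exact mul_pos (by linarith [hx.out]) (heatK_pos x)
    · have : IntegrableOn (fun ζ : ℝ => ζ * heatK 1 ζ - κ * heatK 1 ζ) (Set.Ioi κ) :=
        (integrable_mul_heatK.integrableOn).sub ((heatK_integrable.const_mul κ).integrableOn)
      exact this.congr_fun (fun x _ => by ring) measurableSet_Ioi
  have expand : ∫ ζ in Set.Ioi κ, (ζ - κ) * heatK 1 ζ
      = heatK 1 κ - κ * erfT 1 κ := by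
    rw [show (fun ζ : ℝ => (ζ - κ) * heatK 1 ζ)
        = fun ζ : ℝ => ζ * heatK 1 ζ - κ * heatK 1 ζ from funext fun x => by ring]
    rw [integral_sub integrable_mul_heatK.integrableOn
      ((heatK_integrable.const_mul κ).integrableOn), I1, MeasureTheory.integral_const_mul]
    rfl
  linarith [expand ▸ key]

lemma mills_lower {κ : ℝ} (hκ : 0 < κ) : κ * heatK 1 κ < (1 + κ^2) * erfT 1 κ := by
  have hint2 : IntegrableOn (fun ζ : ℝ => (1 + 1/ζ^2) * heatK 1 ζ) (Set.Ioi κ) := by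
    have h := I2 hκ
    -- reprove integrability as in I2; easier: derive from I2 proof? just redo
    apply Integrable.mono' ((heatK_integrable.const_mul (1 + 1/κ^2)).integrableOn)
    · apply ContinuousOn.aestronglyMeasurable _ measurableSet_Ioi
      apply ContinuousOn.mul _ heatK_cont.continuousOn
      refine continuousOn_const.add (continuousOn_const.div ?_ ?_)
      · exact (continuous_pow 2).continuousOn
      · intro x hx; exact pow_ne_zero _ (lt_trans hκ hx).ne'
    · rw [ae_restrict_iff' measurableSet_Ioi]
      refine Eventually.of_forall fun x hx => ?_
      have hxpos : 0 < x := lt_trans hκ hx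
      have h1 : (1:ℝ) + 1/x^2 ≤ 1 + 1/κ^2 := by gcongr; exact le_of_lt hx
      rw [Real.norm_of_nonneg (mul_nonneg (by positivity) (heatK_pos x).le)]
      exact mul_le_mul_of_nonneg_right h1 (heatK_pos x).le
  have key : 0 < ∫ ζ in Set.Ioi κ, ((1 + κ^2) * heatK 1 ζ - κ^2 * ((1 + 1/ζ^2) * heatK 1 ζ)) := by
    apply pos_integral_aux
    · intro x hx
      have hxpos : 0 < x := lt_trans hκ hx
      have : κ^2 / x^2 < 1 := by
        rw [div_lt_one (by positivity)]
        exact pow_lt_pow_left₀ hx.out hκ.le (by norm_num)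
      have hH := heatK_pos x
      have expand : (1 + κ^2) * heatK 1 x - κ^2 * ((1 + 1/x^2) * heatK 1 x)
          = (1 - κ^2/x^2) * heatK 1 x := by field_simp; ring
      rw [expand]
      exact mul_pos (by linarith) hH
    · exact (((heatK_integrable.const_mul _).integrableOn).sub (hint2.const_mul _))
  rw [integral_sub ((heatK_integrable.const_mul _).integrableOn) (hint2.const_mul _),
    MeasureTheory.integral_const_mul, MeasureTheory.integral_const_mul, I2 hκ] at key
  have : κ^2 * (heatK 1 κ / κ) = κ * heatK 1 κ := by field_simp
  rw [this] at key
  change 0 < (1 + κ^2) * erfT 1 κ - κ * heatK 1 κ at key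
  linarith

lemma erfT_eq {a x : ℝ} (hax : a ≤ x) :
    erfT 1 x = erfT 1 a - ∫ t in a..x, heatK 1 t := by
  have hsplit : Set.Ioc a x ∪ Set.Ioi x = Set.Ioi a := Set.Ioc_union_Ioi_eq_Ioi hax
  have := MeasureTheory.setIntegral_union (f := heatK 1) (μ := volume)
    (s := Set.Ioc a x) (t := Set.Ioi x) Set.Ioc_disjoint_Ioi_same measurableSet_Ioi
    heatK_integrable.integrableOn heatK_integrable.integrableOn
  rw [hsplit] at this
  rw [intervalIntegral.integral_of_le hax]
  show (∫ ζ in Set.Ioi x, heatK 1 ζ) = (∫ ζ in Set.Ioi a, heatK 1 ζ) - _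
  rw [this]; ring

lemma erfT_hasDeriv (κ : ℝ) : HasDerivAt (erfT 1) (-heatK 1 κ) κ := by
  have hfun : HasDerivAt (fun x => erfT 1 (κ - 1) - ∫ t in (κ-1)..x, heatK 1 t)
      (-heatK 1 κ) κ := by
    have h := intervalIntegral.integral_hasDerivAt_right
      (heatK_integrable.intervalIntegrable)
      (heatK_cont.stronglyMeasurable.stronglyMeasurableAtFilter)
      (heatK_cont.continuousAt) (a := κ - 1) (b := κ)
    simpa using (h.const_sub (erfT 1 (κ - 1)))
  apply hfun.congr_of_eventuallyEq
  filter_upwards [eventually_gt_nhds (show κ - 1 < κ by linarith)] with x hx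
  exact erfT_eq (le_of_lt hx)

lemma gfun_hasDeriv (κ : ℝ) :
    HasDerivAt gfun (((1 + κ^2) * erfT 1 κ - κ * heatK 1 κ) / heatK 1 κ) κ := by
  have hnum : HasDerivAt (fun x => x * erfT 1 x)
      (1 * erfT 1 κ + κ * -heatK 1 κ) κ :=
    (hasDerivAt_id κ).mul (erfT_hasDeriv κ)
  have h := hnum.div (heatK_hasDeriv κ) (heatK_ne κ)
  have hform : ((1 * erfT 1 κ + κ * -heatK 1 κ) * heatK 1 κ
      - κ * erfT 1 κ * -(κ * heatK 1 κ)) / heatK 1 κ ^ 2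
      = ((1 + κ^2) * erfT 1 κ - κ * heatK 1 κ) / heatK 1 κ := by
    rw [div_eq_div_iff (pow_ne_zero 2 (heatK_ne κ)) (heatK_ne κ)]
    ring
  exact hform ▸ h

lemma gfun_cont : Continuous gfun :=
  continuous_iff_continuousAt.2 fun x => (gfun_hasDeriv x).continuousAt

lemma gfun_mono : StrictMonoOn gfun (Set.Ioi 0) := by
  apply strictMonoOn_of_deriv_pos (convex_Ioi 0) gfun_cont.continuousOn
  intro x hx
  rw [interior_Ioi] at hx
  rw [(gfun_hasDeriv x).deriv]
  exact div_pos (by linarith [mills_lower hx]) (heatK_pos x)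

lemma gfun_lt_one {κ : ℝ} (hκ : 0 < κ) : gfun κ < 1 := by
  rw [gfun, div_lt_one (heatK_pos κ)]
  exact mills_upper hκ

lemma gfun_gt {κ : ℝ} (hκ : 0 < κ) : κ^2/(1+κ^2) < gfun κ := by
  rw [gfun, div_lt_div_iff₀ (by positivity) (heatK_pos κ)]
  nlinarith [mul_lt_mul_of_pos_left (mills_lower hκ) hκ]

lemma gfun_zero : gfun 0 = 0 := by simp [gfun]

lemma gfun_tendsto_zero : Tendsto gfun (nhdsWithin 0 (Set.Ioi 0)) (nhds 0) := by
  have h : Tendsto gfun (nhds 0) (nhds (gfun 0)) := gfun_cont.continuousAt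
  rw [gfun_zero] at h
  exact h.mono_left nhdsWithin_le_nhds

lemma gfun_tendsto_one : Tendsto gfun atTop (nhds 1) := by
  have h1 : Tendsto (fun κ : ℝ => 1 + κ^2) atTop atTop :=
    tendsto_atTop_add_const_left _ 1 (tendsto_pow_atTop two_ne_zero)
  have h2 : Tendsto (fun κ : ℝ => (1 + κ^2)⁻¹) atTop (nhds 0) :=
    tendsto_inv_atTop_zero.comp h1
  have hlow : Tendsto (fun κ : ℝ => κ^2/(1+κ^2)) atTop (nhds 1) := by
    have := (tendsto_const_nhds (x := (1:ℝ)) (f := atTop)).sub h2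
    rw [sub_zero] at this
    apply this.congr'
    filter_upwards [eventually_gt_atTop (0:ℝ)] with x hx
    have : (1:ℝ) + x^2 ≠ 0 := by positivity
    field_simp
    ring
  apply tendsto_of_tendsto_of_tendsto_of_le_of_le' hlow tendsto_const_nhds
  · filter_upwards [eventually_gt_atTop (0:ℝ)] with x hx
    exact (gfun_gt hx).le
  · filter_upwards [eventually_gt_atTop (0:ℝ)] with x hx
    exact (gfun_lt_one hx).le

theorem stmt0 :
    StrictMonoOn gfun (Set.Ioi 0) ∧
    Tendsto gfun (nhdsWithin 0 (Set.Ioi 0)) (nhds 0) ∧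
    Tendsto gfun atTop (nhds 1) ∧
    ∀ ρ ∈ Set.Ioo (0:ℝ) 1, ∃! κ : ℝ, 0 < κ ∧ gfun κ = ρ := by
  refine ⟨gfun_mono, gfun_tendsto_zero, gfun_tendsto_one, ?_⟩
  rintro ρ ⟨hρ0, hρ1⟩
  have h0 : ∀ᶠ a in nhdsWithin 0 (Set.Ioi 0), gfun a < ρ :=
    gfun_tendsto_zero.eventually (eventually_lt_nhds hρ0)
  obtain ⟨a, ha, ha0⟩ := (h0.and self_mem_nhdsWithin).exists
  have h1 : ∀ᶠ b in atTop, ρ < gfun b :=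
    gfun_tendsto_one.eventually (eventually_gt_nhds hρ1)
  obtain ⟨b, hb, hab⟩ := (h1.and (eventually_gt_atTop a)).exists
  have hsub : Set.Icc (gfun a) (gfun b) ⊆ gfun '' Set.Icc a b :=
    intermediate_value_Icc hab.le gfun_cont.continuousOn
  obtain ⟨κ, hκmem, hκeq⟩ := hsub ⟨ha.le, hb.le⟩
  have hκpos : 0 < κ := lt_of_lt_of_le ha0 hκmem.1
  refine ⟨κ, ⟨hκpos, hκeq⟩, ?_⟩
  rintro y ⟨hy0, hyeq⟩
  exact gfun_mono.injOn (Set.mem_Ioi.2 hy0) (Set.mem_Ioi.2 hκpos) (by rw [hyeq, hκeq])
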